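/- Fix an integer d ≥ 1, p ∈ (0,1), τ > 0, and let (f̃_j)_{j∈ℤ^d} be a bounded family of complex numbers satisfying conj(f̃_j) = f̃_{−j} for all j (so that f(x) = Σ_{j∈ℤ^d} f̃_j ψ_j(x) is real-valued). Then for every x ∈ ℝ^d the double family (ψ_i^*(x) ψ_j(x) (c_{i,j−i} + c_{j,i−j}) f̃_{j−i})_{(i,j)∈ℤ^d×ℤ^d} is absolutely summable and f(x) = (1/(2κ̃)) Σ_{(i,j)∈ℤ^d×ℤ^d} ψ_i^*(x) ψ_j(x) (c_{i,j−i} + c_{j,i−j}) f̃_{j−i}. -/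

import Mathlib

set_option maxHeartbeats 1000000


/-! Statement 11: classical–quantum consistency f(x) = ⟨T̃f⟩_{ϱ_x} for real-valued observables, in matrix elements. -/

noncomputable section

namespace QECD

/-- `|j|_p = |j_1|^p + … + |j_d|^p` for a multi-index `j ∈ ℤ^d`. -/
def normP (d : ℕ) (p : ℝ) (j : Fin d → ℤ) : ℝ := ∑ i, |((j i : ℝ))| ^ p

/-- `ψ_j(x) = e^{−τ|j|_p/2} e^{i j·x}` on the `d`-torus. -/
def psiD (d : ℕ) (p τ : ℝ) (j : Fin d → ℤ) (x : Fin d → ℝ) : ℂ :=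
  (Real.exp (-(τ * normP d p j) / 2) : ℂ) *
    Complex.exp (Complex.I * ((∑ i, (j i : ℝ) * x i : ℝ) : ℂ))

/-- Structure constants `c_{jl} = e^{−τ(|j|_p + |l|_p − |j+l|_p)/2}`. -/
def cstD (d : ℕ) (p τ : ℝ) (j l : Fin d → ℤ) : ℝ :=
  Real.exp (-(τ * (normP d p j + normP d p l - normP d p (j + l))) / 2)

/-- `κ̃ = Σ_{j∈ℤ^d} e^{−τ|j|_p}`. -/
def kapTilde (d : ℕ) (p τ : ℝ) : ℝ := ∑' j : Fin d → ℤ, Real.exp (-(τ * normP d p j))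

private lemma summable_exp_nat {c p : ℝ} (hc : 0 < c) (hp : 0 < p) :
    Summable fun n : ℕ => Real.exp (-(c * (n : ℝ) ^ p)) := by
  rw [← summable_nat_add_iff 1]
  set m : ℕ := ⌈2 / p⌉₊ with hm
  have hmp : (2 : ℝ) ≤ m * p := by
    have h1 : 2 / p ≤ (m : ℝ) := Nat.le_ceil _
    calc (2 : ℝ) = (2 / p) * p := by field_simp
    _ ≤ m * p := by nlinarith
  have hC : Summable fun n : ℕ =>
      ((m.factorial : ℝ) / c ^ m) * (((n + 1 : ℕ) : ℝ) ^ (2 : ℝ))⁻¹ := by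
    apply Summable.mul_left
    exact (summable_nat_add_iff 1).mpr (Real.summable_nat_rpow_inv.mpr one_lt_two)
  refine hC.of_nonneg_of_le (fun n => (Real.exp_pos _).le) fun n => ?_
  set x : ℝ := ((n + 1 : ℕ) : ℝ) with hx
  have hx1 : (1 : ℝ) ≤ x := Nat.one_le_cast.mpr (Nat.succ_le_succ (Nat.zero_le n))
  have hx0 : (0 : ℝ) < x := lt_of_lt_of_le one_pos hx1
  have hxp : (0 : ℝ) < x ^ p := Real.rpow_pos_of_pos hx0 p
  have h1 : (c * x ^ p) ^ m / m.factorial ≤ Real.exp (c * x ^ p) :=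
    Real.pow_div_factorial_le_exp (x := c * x ^ p) (by positivity) m
  have h2 : (0 : ℝ) < (c * x ^ p) ^ m / m.factorial := by positivity
  have hxm : x ^ (2 : ℝ) ≤ (x ^ p) ^ m := by
    rw [← Real.rpow_natCast (x ^ p) m, ← Real.rpow_mul hx0.le]
    exact Real.rpow_le_rpow_of_exponent_le hx1 (by rw [mul_comm]; exact hmp)
  calc Real.exp (-(c * x ^ p)) = (Real.exp (c * x ^ p))⁻¹ := by rw [Real.exp_neg]
    _ ≤ ((c * x ^ p) ^ m / m.factorial)⁻¹ := by
        exact inv_anti₀ h2 h1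
    _ = (m.factorial : ℝ) / (c ^ m * (x ^ p) ^ m) := by
        rw [inv_div, mul_pow]
    _ ≤ (m.factorial : ℝ) / (c ^ m * x ^ (2 : ℝ)) := by
        gcongr
    _ = ((m.factorial : ℝ) / c ^ m) * (x ^ (2 : ℝ))⁻¹ := by
        rw [div_eq_mul_inv, mul_inv, div_eq_mul_inv, mul_assoc]

private lemma summable_exp_int {c p : ℝ} (hc : 0 < c) (hp : 0 < p) :
    Summable fun n : ℤ => Real.exp (-(c * |(n : ℝ)| ^ p)) := by
  apply Summable.of_nat_of_neg
  · simpa using summable_exp_nat hc hp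
  · simpa using summable_exp_nat hc hp

private lemma summable_exp_pi (d : ℕ) {c p : ℝ} (hc : 0 < c) (hp : 0 < p) :
    Summable fun j : Fin d → ℤ => Real.exp (-(c * normP d p j)) := by
  induction d with
  | zero => exact .of_finite
  | succ n ih =>
    rw [← (Fin.consEquiv (fun _ : Fin (n + 1) => ℤ)).summable_iff]
    have key : ∀ q : ℤ × (Fin n → ℤ),
        Real.exp (-(c * normP (n + 1) p (Fin.cons q.1 q.2)))
          = Real.exp (-(c * |(q.1 : ℝ)| ^ p)) * Real.exp (-(c * normP n p q.2)) := by
      intro q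
      rw [← Real.exp_add]
      congr 1
      have : normP (n + 1) p (Fin.cons q.1 q.2) = |(q.1 : ℝ)| ^ p + normP n p q.2 := by
        simp [normP, Fin.sum_univ_succ]
      rw [this]; ring
    simp only [Fin.consEquiv, Equiv.coe_fn_mk, Function.comp]
    exact Summable.congr
      ((summable_exp_int hc hp).mul_of_nonneg ih (fun _ => (Real.exp_pos _).le)
        (fun _ => (Real.exp_pos _).le)) (fun q => (key q).symm)


private lemma normP_neg (d : ℕ) (p : ℝ) (k : Fin d → ℤ) : normP d p (-k) = normP d p k := by
  simp [normP]

private lemma key_calc (rA rB c1 c2 rK aA aB tA tB : ℝ) (z : ℂ)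
    (hr1 : rA * rB * c1 = aA * rK) (hr2 : rA * rB * c2 = aB * rK) :
    ((rA : ℂ) * Complex.exp (-(Complex.I * (tA : ℂ)))) *
        ((rB : ℂ) * Complex.exp (Complex.I * (tB : ℂ))) * ((c1 + c2 : ℝ) : ℂ) * z
      = ((aA + aB : ℝ) : ℂ) * (z * ((rK : ℂ) * Complex.exp (Complex.I * ((tB - tA : ℝ) : ℂ)))) := by
  have hexp : Complex.exp (-(Complex.I * (tA : ℂ))) * Complex.exp (Complex.I * (tB : ℂ))
      = Complex.exp (Complex.I * ((tB - tA : ℝ) : ℂ)) := by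
    rw [← Complex.exp_add]
    push_cast
    ring
  have h3 : rA * rB * (c1 + c2) = (aA + aB) * rK := by
    rw [mul_add, hr1, hr2, add_mul]
  calc ((rA : ℂ) * Complex.exp (-(Complex.I * (tA : ℂ)))) *
        ((rB : ℂ) * Complex.exp (Complex.I * (tB : ℂ))) * ((c1 + c2 : ℝ) : ℂ) * z
      = ((rA * rB * (c1 + c2) : ℝ) : ℂ) *
          (Complex.exp (-(Complex.I * (tA : ℂ))) * Complex.exp (Complex.I * (tB : ℂ))) * z := by
        push_cast; ring
    _ = ((aA + aB : ℝ) : ℂ) * ((rK : ℂ) * Complex.exp (Complex.I * ((tB - tA : ℝ) : ℂ))) * z := by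
        rw [hexp, h3]; push_cast; ring
    _ = _ := by ring

private lemma summand_eq (d : ℕ) (p τ : ℝ) (ft : (Fin d → ℤ) → ℂ) (x : Fin d → ℝ)
    (i j : Fin d → ℤ) :
    (starRingEnd ℂ) (psiD d p τ i x) * psiD d p τ j x *
        ((cstD d p τ i (j - i) + cstD d p τ j (i - j) : ℝ) : ℂ) * ft (j - i)
      = ((Real.exp (-(τ * normP d p i)) + Real.exp (-(τ * normP d p j)) : ℝ) : ℂ) *
          (ft (j - i) * psiD d p τ (j - i) x) := by
  have hij : i + (j - i) = j := by abel
  have hji : j + (i - j) = i := by abel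
  have hKK : normP d p (i - j) = normP d p (j - i) := by
    rw [show i - j = -(j - i) by abel, normP_neg]
  set A := normP d p i with hA
  set Bn := normP d p j with hB
  set K := normP d p (j - i) with hK
  have hc1 : cstD d p τ i (j - i) = Real.exp (-(τ * (A + K - Bn)) / 2) := by
    rw [cstD, hij]
  have hc2 : cstD d p τ j (i - j) = Real.exp (-(τ * (Bn + K - A)) / 2) := by
    rw [cstD, hji, hKK]
  have htsum : (∑ l, ((j - i) l : ℝ) * x l)
      = (∑ l, (j l : ℝ) * x l) - (∑ l, (i l : ℝ) * x l) := by
    rw [← Finset.sum_sub_distrib]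
    congr 1; funext l
    push_cast [Pi.sub_apply]
    ring
  have hconjA : (starRingEnd ℂ) (psiD d p τ i x)
      = (Real.exp (-(τ * A) / 2) : ℂ) *
          Complex.exp (-(Complex.I * ((∑ l, (i l : ℝ) * x l : ℝ) : ℂ))) := by
    rw [psiD, map_mul, Complex.conj_ofReal, ← Complex.exp_conj, map_mul, Complex.conj_I,
      Complex.conj_ofReal, neg_mul]
  rw [hconjA, hc1, hc2]
  simp only [psiD]
  rw [htsum]
  apply key_calc
  · rw [← Real.exp_add, ← Real.exp_add, ← Real.exp_add]
    congr 1; ring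
  · rw [← Real.exp_add, ← Real.exp_add, ← Real.exp_add]
    congr 1; ring

private def aF (d : ℕ) (p τ : ℝ) (k : Fin d → ℤ) : ℝ := Real.exp (-(τ * normP d p k))

private def rF (d : ℕ) (p τ : ℝ) (k : Fin d → ℤ) : ℝ := Real.exp (-(τ * normP d p k) / 2)

private def eq1 (G : Type*) [AddCommGroup G] : (G × G) ≃ (G × G) :=
  ⟨fun q => (q.1, q.1 + q.2), fun q => (q.1, q.2 - q.1), fun q => by simp, fun q => by simp⟩

private def eq2 (G : Type*) [AddCommGroup G] : (G × G) ≃ (G × G) :=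
  ⟨fun q => (q.2 - q.1, q.2), fun q => (q.2 - q.1, q.2), fun q => by simp, fun q => by simp⟩

private def eq3 (G : Type*) [AddCommGroup G] : (G × G) ≃ (G × G) :=
  ⟨fun q => (q.2, q.2 + q.1), fun q => (q.2 - q.1, q.1), fun q => by simp, fun q => by simp⟩

/-- For bounded coefficients `(f̃_j)` with `conj f̃_j = f̃_{−j}` (so that
`f = Σ_j f̃_j ψ_j` is real-valued), the double family
`(ψ_i^*(x) ψ_j(x)(c_{i,j−i}+c_{j,i−j}) f̃_{j−i})` is absolutely summable and
`f(x) = (1/(2κ̃)) Σ_{(i,j)} ψ_i^*(x) ψ_j(x)(c_{i,j−i}+c_{j,i−j}) f̃_{j−i}`. -/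
theorem selfadjoint_operator_expectation (d : ℕ) (hd : 1 ≤ d) (p τ : ℝ)
    (hp : p ∈ Set.Ioo (0 : ℝ) 1) (hτ : 0 < τ)
    (ft : (Fin d → ℤ) → ℂ) (B : ℝ) (hB : ∀ j, ‖ft j‖ ≤ B)
    (hconj : ∀ j, (starRingEnd ℂ) (ft j) = ft (-j)) (x : Fin d → ℝ) :
    Summable (fun ij : (Fin d → ℤ) × (Fin d → ℤ) =>
      ‖(starRingEnd ℂ) (psiD d p τ ij.1 x) * psiD d p τ ij.2 x *
        ((cstD d p τ ij.1 (ij.2 - ij.1) + cstD d p τ ij.2 (ij.1 - ij.2) : ℝ) : ℂ) *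
        ft (ij.2 - ij.1)‖) ∧
    (∑' j : Fin d → ℤ, ft j * psiD d p τ j x)
      = (1 / (2 * (kapTilde d p τ : ℂ))) *
          ∑' ij : (Fin d → ℤ) × (Fin d → ℤ),
            (starRingEnd ℂ) (psiD d p τ ij.1 x) * psiD d p τ ij.2 x *
              ((cstD d p τ ij.1 (ij.2 - ij.1) + cstD d p τ ij.2 (ij.1 - ij.2) : ℝ) : ℂ) *
              ft (ij.2 - ij.1) := by
  obtain ⟨hp0, _⟩ := hp
  have ha : Summable (aF d p τ) := summable_exp_pi d hτ hp0
  have hr : Summable (rF d p τ) := by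
    have h := summable_exp_pi d (half_pos hτ) hp0
    refine h.congr fun k => ?_
    rw [rF]
    congr 1; ring
  have ha0 : ∀ k, 0 ≤ aF d p τ k := fun k => (Real.exp_pos _).le
  have hr0 : ∀ k, 0 ≤ rF d p τ k := fun k => (Real.exp_pos _).le
  have hB0 : 0 ≤ B := le_trans (norm_nonneg _) (hB 0)
  have habs : ∀ k : Fin d → ℤ, ‖psiD d p τ k x‖ = rF d p τ k := by
    intro k
    rw [psiD, norm_mul, Complex.norm_real, Real.norm_eq_abs, Complex.norm_exp]
    have : (Complex.I * ((∑ l, (k l : ℝ) * x l : ℝ) : ℂ)).re = 0 := by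
      simp [Complex.mul_re]
    rw [this, Real.exp_zero, mul_one, abs_of_pos (Real.exp_pos _), rF]
  have hg1 : Summable fun q : (Fin d → ℤ) × (Fin d → ℤ) => aF d p τ q.1 * rF d p τ (q.2 - q.1) := by
    rw [← (eq1 (Fin d → ℤ)).summable_iff]
    have heq : ((fun q : (Fin d → ℤ) × (Fin d → ℤ) => aF d p τ q.1 * rF d p τ (q.2 - q.1)) ∘
          (eq1 (Fin d → ℤ)))
        = fun q : (Fin d → ℤ) × (Fin d → ℤ) => aF d p τ q.1 * rF d p τ q.2 := by
      funext q
      simp [eq1, Function.comp]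
    rw [heq]
    exact ha.mul_of_nonneg hr ha0 hr0
  have hg2 : Summable fun q : (Fin d → ℤ) × (Fin d → ℤ) => aF d p τ q.2 * rF d p τ (q.2 - q.1) := by
    rw [← (eq2 (Fin d → ℤ)).summable_iff]
    have heq : ((fun q : (Fin d → ℤ) × (Fin d → ℤ) => aF d p τ q.2 * rF d p τ (q.2 - q.1)) ∘
          (eq2 (Fin d → ℤ)))
        = fun q : (Fin d → ℤ) × (Fin d → ℤ) => rF d p τ q.1 * aF d p τ q.2 := by
      funext q
      simp [eq2, Function.comp, mul_comm]
    rw [heq]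
    exact hr.mul_of_nonneg ha hr0 ha0
  have hg : Summable fun q : (Fin d → ℤ) × (Fin d → ℤ) =>
      ((aF d p τ q.1 + aF d p τ q.2) * rF d p τ (q.2 - q.1)) * B := by
    apply Summable.mul_right
    exact (hg1.add hg2).congr fun q => by ring
  have hAbs : Summable (fun ij : (Fin d → ℤ) × (Fin d → ℤ) =>
      ‖(starRingEnd ℂ) (psiD d p τ ij.1 x) * psiD d p τ ij.2 x *
        ((cstD d p τ ij.1 (ij.2 - ij.1) + cstD d p τ ij.2 (ij.1 - ij.2) : ℝ) : ℂ) *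
        ft (ij.2 - ij.1)‖) := by
    refine hg.of_nonneg_of_le (fun q => norm_nonneg _) fun q => ?_
    rw [summand_eq]
    rw [norm_mul, norm_mul, Complex.norm_real, Real.norm_eq_abs, habs]
    have h1 : |Real.exp (-(τ * normP d p q.1)) + Real.exp (-(τ * normP d p q.2))|
        = aF d p τ q.1 + aF d p τ q.2 := by
      rw [abs_of_nonneg (by positivity)]; rfl
    rw [h1]
    calc (aF d p τ q.1 + aF d p τ q.2) * (‖ft (q.2 - q.1)‖ * rF d p τ (q.2 - q.1))
        ≤ (aF d p τ q.1 + aF d p τ q.2) * (B * rF d p τ (q.2 - q.1)) := by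
          exact mul_le_mul_of_nonneg_left
            (mul_le_mul_of_nonneg_right (hB _) (hr0 _)) (add_nonneg (ha0 _) (ha0 _))
      _ = ((aF d p τ q.1 + aF d p τ q.2) * rF d p τ (q.2 - q.1)) * B := by ring
  refine ⟨hAbs, ?_⟩
  have hS : Summable (fun ij : (Fin d → ℤ) × (Fin d → ℤ) =>
      (starRingEnd ℂ) (psiD d p τ ij.1 x) * psiD d p τ ij.2 x *
        ((cstD d p τ ij.1 (ij.2 - ij.1) + cstD d p τ ij.2 (ij.1 - ij.2) : ℝ) : ℂ) *
        ft (ij.2 - ij.1)) := by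
    apply Summable.of_norm
    simpa using hAbs
  have hcomp : ∀ q : (Fin d → ℤ) × (Fin d → ℤ),
      ((starRingEnd ℂ) (psiD d p τ (eq3 (Fin d → ℤ) q).1 x) * psiD d p τ (eq3 (Fin d → ℤ) q).2 x *
        ((cstD d p τ (eq3 (Fin d → ℤ) q).1 ((eq3 (Fin d → ℤ) q).2 - (eq3 (Fin d → ℤ) q).1) +
            cstD d p τ (eq3 (Fin d → ℤ) q).2
              ((eq3 (Fin d → ℤ) q).1 - (eq3 (Fin d → ℤ) q).2) : ℝ) : ℂ) *
        ft ((eq3 (Fin d → ℤ) q).2 - (eq3 (Fin d → ℤ) q).1))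
      = ((aF d p τ q.2 + aF d p τ (q.2 + q.1) : ℝ) : ℂ) * (ft q.1 * psiD d p τ q.1 x) := by
    intro q
    rw [summand_eq]
    have h1 : (eq3 (Fin d → ℤ) q).1 = q.2 := rfl
    have h2 : (eq3 (Fin d → ℤ) q).2 = q.2 + q.1 := rfl
    rw [h1, h2, show q.2 + q.1 - q.2 = q.1 from by abel]
    rfl
  have hκ : 0 < kapTilde d p τ :=
    Summable.tsum_pos (summable_exp_pi d hτ hp0) (fun j => (Real.exp_pos _).le) 0 (Real.exp_pos _)
  have hκC : (2 : ℂ) * (kapTilde d p τ : ℂ) ≠ 0 := by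
    simp only [ne_eq, mul_eq_zero, OfNat.ofNat_ne_zero, false_or, Complex.ofReal_eq_zero]
    exact ne_of_gt hκ
  have hsum1 : (∑' ij : (Fin d → ℤ) × (Fin d → ℤ),
        (starRingEnd ℂ) (psiD d p τ ij.1 x) * psiD d p τ ij.2 x *
          ((cstD d p τ ij.1 (ij.2 - ij.1) + cstD d p τ ij.2 (ij.1 - ij.2) : ℝ) : ℂ) *
          ft (ij.2 - ij.1))
      = ∑' q : (Fin d → ℤ) × (Fin d → ℤ),
          ((aF d p τ q.2 + aF d p τ (q.2 + q.1) : ℝ) : ℂ) * (ft q.1 * psiD d p τ q.1 x) := by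
    rw [← (eq3 (Fin d → ℤ)).tsum_eq]
    exact tsum_congr hcomp
  have hFsum : Summable (fun q : (Fin d → ℤ) × (Fin d → ℤ) =>
      ((aF d p τ q.2 + aF d p τ (q.2 + q.1) : ℝ) : ℂ) * (ft q.1 * psiD d p τ q.1 x)) := by
    have h := ((eq3 (Fin d → ℤ)).summable_iff.mpr hS)
    exact h.congr hcomp
  have hinner : ∀ k : Fin d → ℤ,
      (∑' i : Fin d → ℤ, ((aF d p τ i + aF d p τ (i + k) : ℝ) : ℂ))
        = ((2 * kapTilde d p τ : ℝ) : ℂ) := by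
    intro k
    have hak : Summable fun i : Fin d → ℤ => aF d p τ (i + k) :=
      ((Equiv.addRight k).summable_iff).mpr ha
    have h1 : (∑' i : Fin d → ℤ, (aF d p τ i + aF d p τ (i + k))) = 2 * kapTilde d p τ := by
      rw [Summable.tsum_add ha hak]
      have h2 : (∑' i : Fin d → ℤ, aF d p τ (i + k)) = kapTilde d p τ := by
        rw [kapTilde]
        exact (Equiv.addRight k).tsum_eq (aF d p τ)
      rw [h2]
      have h3 : (∑' i : Fin d → ℤ, aF d p τ i) = kapTilde d p τ := rfl
      rw [h3]; ring
    rw [← Complex.ofReal_tsum, h1]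
  have hsum2 : (∑' q : (Fin d → ℤ) × (Fin d → ℤ),
        ((aF d p τ q.2 + aF d p τ (q.2 + q.1) : ℝ) : ℂ) * (ft q.1 * psiD d p τ q.1 x))
      = ((2 * kapTilde d p τ : ℝ) : ℂ) * ∑' k : Fin d → ℤ, ft k * psiD d p τ k x := by
    rw [Summable.tsum_prod hFsum]
    have hin : ∀ k : Fin d → ℤ,
        (∑' i : Fin d → ℤ, ((aF d p τ i + aF d p τ (i + k) : ℝ) : ℂ) * (ft k * psiD d p τ k x))
          = ((2 * kapTilde d p τ : ℝ) : ℂ) * (ft k * psiD d p τ k x) := by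
      intro k
      rw [tsum_mul_right, hinner k]
    calc (∑' (k : Fin d → ℤ) (i : Fin d → ℤ),
          ((aF d p τ i + aF d p τ (i + k) : ℝ) : ℂ) * (ft k * psiD d p τ k x))
        = ∑' k : Fin d → ℤ, ((2 * kapTilde d p τ : ℝ) : ℂ) * (ft k * psiD d p τ k x) :=
          tsum_congr hin
      _ = _ := tsum_mul_left
  rw [hsum1, hsum2]
  push_cast
  rw [← mul_assoc, one_div, inv_mul_cancel₀ hκC, one_mul]

end QECD
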